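/- arXiv:2507.18230 — 2 statements merged into one kernel-verified Lean document; each statement's English description precedes it below -/
import Mathlib

section
/- Let R be an echelon-independent connected finite poset with at least 2 elements. Then echelonmotion on R has no fixed points: for every linear extension σ and every x ∈ R, Ech_σ(x) ≠ x. -/
open scoped Classical
open Finset

noncomputable section

/-- A linear extension of a finite poset, viewed as an order-preserving
bijection onto `Fin n`. -/
def IsLinExt {α : Type*} [PartialOrder α] {n : ℕ} (σ : α ≃ Fin n) : Prop :=
  ∀ a b : α, a ≤ b → σ a ≤ σ b

/-- The Cartan matrix of a finite poset with respect to a linear extension. -/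
def cartan {α : Type*} [PartialOrder α] {n : ℕ} (σ : α ≃ Fin n) :
    Matrix (Fin n) (Fin n) ℂ :=
  fun i j => if σ.symm j ≤ σ.symm i then 1 else 0

/-- Upper-triangular matrices. -/
def IsUpperTri {n : ℕ} (U : Matrix (Fin n) (Fin n) ℂ) : Prop :=
  ∀ i j : Fin n, j < i → U i j = 0

/-- The permutation matrix of `π`, with a `1` in row `i` and column `π i`. -/
def permMat {n : ℕ} (π : Equiv.Perm (Fin n)) : Matrix (Fin n) (Fin n) ℂ :=
  fun i j => if π i = j then 1 else 0

/-- `π` is the (unique) permutation indexing the Bruhat cell of `W`,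
i.e. `W ∈ B (permMat π) B` with `B` the invertible upper-triangular matrices. -/
def IsBruhatPerm {n : ℕ} (W : Matrix (Fin n) (Fin n) ℂ) (π : Equiv.Perm (Fin n)) : Prop :=
  ∃ U₁ U₂ : Matrix (Fin n) (Fin n) ℂ,
    IsUpperTri U₁ ∧ IsUpperTri U₂ ∧ IsUnit U₁.det ∧ IsUnit U₂.det ∧
      W = U₁ * permMat π * U₂

/-- Echelonmotion with respect to `σ`, given the Bruhat permutation `π` of the
Cartan matrix: `ech σ π x = y` iff `permMat π` has a `1` in row `σ y`, column `σ x`. -/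
def ech {α : Type*} [PartialOrder α] {n : ℕ} (σ : α ≃ Fin n) (π : Equiv.Perm (Fin n)) :
    α → α := fun x => σ.symm (π⁻¹ (σ x))

end

noncomputable section Aux

namespace EchAux

open Matrix

variable {n : ℕ}

lemma upperTri_one : IsUpperTri (1 : Matrix (Fin n) (Fin n) ℂ) := by
  intro i j h
  exact Matrix.one_apply_ne (ne_of_gt h)

lemma upperTri_mul {A B : Matrix (Fin n) (Fin n) ℂ} (hA : IsUpperTri A) (hB : IsUpperTri B) :
    IsUpperTri (A * B) := by
  intro i j hij
  rw [Matrix.mul_apply]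
  apply Finset.sum_eq_zero
  intro k _
  rcases le_or_gt i k with h | h
  · rw [hB k j (lt_of_lt_of_le hij h), mul_zero]
  · rw [hA i k h, zero_mul]

lemma upperTri_blockTriangular {U : Matrix (Fin n) (Fin n) ℂ} (h : IsUpperTri U) :
    U.BlockTriangular id := fun i j hij => h i j hij

lemma upperTri_det {U : Matrix (Fin n) (Fin n) ℂ} (h : IsUpperTri U) :
    U.det = ∏ i, U i i :=
  Matrix.det_of_upperTriangular (upperTri_blockTriangular h)

lemma upperTri_diag_ne_zero {U : Matrix (Fin n) (Fin n) ℂ} (h : IsUpperTri U)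
    (hd : IsUnit U.det) (i : Fin n) : U i i ≠ 0 := by
  rw [upperTri_det h] at hd
  have := hd.ne_zero
  rw [Finset.prod_ne_zero_iff] at this
  exact this i (Finset.mem_univ i)

lemma upperTri_inv {U : Matrix (Fin n) (Fin n) ℂ} (h : IsUpperTri U) (hd : IsUnit U.det) :
    IsUpperTri U⁻¹ := by
  haveI := U.invertibleOfIsUnitDet hd
  intro i j hij
  exact Matrix.blockTriangular_inv_of_blockTriangular (upperTri_blockTriangular h) hij

lemma permMat_mul_apply (π : Equiv.Perm (Fin n)) (B : Matrix (Fin n) (Fin n) ℂ) (i j) :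
    (permMat π * B) i j = B (π i) j := by
  rw [Matrix.mul_apply]
  simp only [permMat, ite_mul, one_mul, zero_mul]
  rw [Finset.sum_ite_eq]
  simp

end EchAux

end Aux

noncomputable section Pivot

namespace EchAux

open Matrix

variable {n : ℕ}

def unskip (p i : Fin (n + 1)) (h : i ≠ p) : Fin n :=
  (Fin.exists_succAbove_eq h).choose

lemma succAbove_unskip (p i : Fin (n + 1)) (h : i ≠ p) :
    p.succAbove (unskip p i h) = i :=
  (Fin.exists_succAbove_eq h).choose_spec

lemma unskip_succAbove (p : Fin (n + 1)) (a : Fin n) (h : p.succAbove a ≠ p) :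
    unskip p (p.succAbove a) h = a :=
  Fin.succAbove_right_injective (by rw [succAbove_unskip])

def pivotLift (p : Fin (n + 1)) (c : ℂ) (U : Matrix (Fin n) (Fin n) ℂ) :
    Matrix (Fin (n + 1)) (Fin (n + 1)) ℂ :=
  fun i j =>
    if hi : i = p then (if j = p then c else 0)
    else if hj : j = p then 0 else U (unskip p i hi) (unskip p j hj)

lemma pivotLift_p_right (p : Fin (n + 1)) (c : ℂ) (U) (j) :
    pivotLift p c U p j = if j = p then c else 0 := by
  simp [pivotLift]

lemma pivotLift_left_p (p : Fin (n + 1)) (c : ℂ) (U) (i) :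
    pivotLift p c U i p = if i = p then c else 0 := by
  by_cases hi : i = p <;> simp [pivotLift, hi]

lemma pivotLift_sa_sa (p : Fin (n + 1)) (c : ℂ) (U) (a b : Fin n) :
    pivotLift p c U (p.succAbove a) (p.succAbove b) = U a b := by
  rw [pivotLift]
  rw [dif_neg (Fin.succAbove_ne p a)]
  rw [dif_neg (Fin.succAbove_ne p b)]
  rw [unskip_succAbove, unskip_succAbove]

lemma pivotLift_p_sa (p : Fin (n + 1)) (c : ℂ) (U) (a : Fin n) :
    pivotLift p c U p (p.succAbove a) = 0 := by
  rw [pivotLift_p_right, if_neg (Fin.succAbove_ne p a)]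

lemma pivotLift_sa_p (p : Fin (n + 1)) (c : ℂ) (U) (a : Fin n) :
    pivotLift p c U (p.succAbove a) p = 0 := by
  rw [pivotLift_left_p, if_neg (Fin.succAbove_ne p a)]

lemma pivotLift_upperTri {p : Fin (n + 1)} {c : ℂ} {U : Matrix (Fin n) (Fin n) ℂ}
    (h : IsUpperTri U) : IsUpperTri (pivotLift p c U) := by
  intro i j hij
  by_cases hi : i = p
  · subst hi
    rw [pivotLift_p_right, if_neg (ne_of_lt hij)]
  · by_cases hj : j = p
    · subst hj
      simp [pivotLift, hi]
    · rw [pivotLift, dif_neg hi, dif_neg hj]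
      apply h
      have h1 : p.succAbove (unskip p j hj) < p.succAbove (unskip p i hi) := by
        rw [succAbove_unskip, succAbove_unskip]; exact hij
      exact (Fin.succAbove_lt_succAbove_iff).mp h1

lemma pivotLift_submatrix (p : Fin (n + 1)) (c : ℂ) (U) :
    (pivotLift p c U).submatrix p.succAbove p.succAbove = U := by
  ext a b
  exact pivotLift_sa_sa p c U a b

lemma pivotLift_det (p : Fin (n + 1)) (c : ℂ) (U : Matrix (Fin n) (Fin n) ℂ) :
    (pivotLift p c U).det = c * U.det := by
  rw [Matrix.det_succ_column _ p]
  rw [Finset.sum_eq_single p]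
  · rw [pivotLift_left_p, if_pos rfl, pivotLift_submatrix]
    have : ((-1 : ℂ)) ^ ((p : ℕ) + (p : ℕ)) = 1 := Even.neg_one_pow ⟨p, rfl⟩
    rw [this, one_mul]
  · intro i _ hne
    rw [pivotLift_left_p, if_neg hne]
    ring
  · intro h
    exact absurd (Finset.mem_univ p) h

end EchAux

end Pivot

noncomputable section BruhatExist

namespace EchAux

open Matrix

theorem bruhat_exists : ∀ {n : ℕ} (W : Matrix (Fin n) (Fin n) ℂ), IsUnit W.det →
    ∃ (π : Equiv.Perm (Fin n)) (U₁ U₂ : Matrix (Fin n) (Fin n) ℂ),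
      IsUpperTri U₁ ∧ IsUpperTri U₂ ∧ IsUnit U₁.det ∧ IsUnit U₂.det ∧
        W = U₁ * permMat π * U₂ := by
  intro n
  induction n with
  | zero =>
      intro W _
      refine ⟨1, 1, 1, ?_, ?_, ?_, ?_, ?_⟩
      · intro i j _; exact absurd i.2 (by omega)
      · intro i j _; exact absurd i.2 (by omega)
      · simp
      · simp
      · apply Matrix.ext; intro i _; exact absurd i.2 (by omega)
  | succ n ih =>
      intro W hW
      -- column 0 is nonzero
      have hcol : ∃ i, W i 0 ≠ 0 := by
        by_contra h
        push_neg at h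
        have hz : W.det = 0 := Matrix.det_eq_zero_of_column_eq_zero 0 h
        rw [hz] at hW
        exact hW.ne_zero rfl
      set s : Finset (Fin (n + 1)) := Finset.univ.filter (fun i => W i 0 ≠ 0) with hs
      have hsne : s.Nonempty := ⟨hcol.choose, by simp [hs, hcol.choose_spec]⟩
      set i₀ := s.max' hsne with hi₀def
      have hWi₀ : W i₀ 0 ≠ 0 := (Finset.mem_filter.mp (s.max'_mem hsne)).2
      have hbelow : ∀ i, i₀ < i → W i 0 = 0 := by
        intro i hi
        by_contra hne
        have hmem : i ∈ s := Finset.mem_filter.mpr ⟨Finset.mem_univ i, hne⟩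
        exact absurd (s.le_max' i hmem) (not_le.2 hi)
      set c := W i₀ 0 with hc
      -- the row-clearing matrix E
      set E : Matrix (Fin (n + 1)) (Fin (n + 1)) ℂ :=
        1 + Matrix.of (fun i j => if j = i₀ ∧ i < i₀ then -(W i 0) / c else 0) with hE
      have hEtri : IsUpperTri E := by
        intro i j hij
        rw [hE]
        simp only [Matrix.add_apply, Matrix.one_apply, Matrix.of_apply]
        rw [if_neg (ne_of_gt hij), if_neg, add_zero]
        rintro ⟨rfl, hlt⟩
        exact absurd (hij.trans hlt) (lt_irrefl _)
      have hEdiag : ∀ i, E i i = 1 := by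
        intro i
        rw [hE]
        simp only [Matrix.add_apply, Matrix.one_apply_eq, Matrix.of_apply]
        rw [if_neg, add_zero]
        rintro ⟨rfl, hlt⟩
        exact absurd hlt (lt_irrefl _)
      have hEdet : IsUnit E.det := by
        rw [upperTri_det hEtri]
        simp [hEdiag]
      -- M₁ = E * W
      have hM₁ : ∀ i j, (E * W) i j
          = W i j + (if i < i₀ then -(W i 0) / c * W i₀ j else 0) := by
        intro i j
        rw [hE, Matrix.add_mul, Matrix.one_mul]
        simp only [Matrix.add_apply]
        congr 1
        rw [Matrix.mul_apply]
        by_cases h : i < i₀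
        · simp only [Matrix.of_apply, h, and_true, ite_mul, zero_mul]
          rw [Finset.sum_ite_eq' Finset.univ i₀ (fun k => -W i 0 / c * W k j),
            if_pos (Finset.mem_univ _)]
          simp
        · simp only [Matrix.of_apply, h, and_false, if_false, zero_mul]
          rw [Finset.sum_const_zero]
      have hM₁col : ∀ i, (E * W) i 0 = if i = i₀ then c else 0 := by
        intro i
        rw [hM₁]
        rcases lt_trichotomy i i₀ with h | h | h
        · rw [if_pos h, if_neg (ne_of_lt h)]
          rw [div_mul_cancel₀ _ hWi₀]
          ring
        · subst h
          rw [if_neg (lt_irrefl _), if_pos rfl, add_zero]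
        · rw [if_neg (not_lt.2 h.le), if_neg (ne_of_gt h), hbelow i h, add_zero]
      -- the column-clearing matrix F
      set F : Matrix (Fin (n + 1)) (Fin (n + 1)) ℂ :=
        1 + Matrix.of (fun k j => if k = 0 ∧ j ≠ 0 then -((E * W) i₀ j) / c else 0) with hF
      have hFtri : IsUpperTri F := by
        intro i j hij
        rw [hF]
        simp only [Matrix.add_apply, Matrix.one_apply, Matrix.of_apply]
        rw [if_neg (ne_of_gt hij), if_neg, add_zero]
        rintro ⟨rfl, _⟩
        exact absurd hij (by simp)
      have hFdiag : ∀ i, F i i = 1 := by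
        intro i
        rw [hF]
        simp only [Matrix.add_apply, Matrix.one_apply_eq, Matrix.of_apply]
        rw [if_neg, add_zero]
        rintro ⟨rfl, h⟩
        exact h rfl
      have hFdet : IsUnit F.det := by
        rw [upperTri_det hFtri]
        simp [hFdiag]
      set M := E * W * F with hMdef
      have hM : ∀ i j, M i j
          = (E * W) i j + (if j ≠ 0 then (E * W) i 0 * (-((E * W) i₀ j) / c) else 0) := by
        intro i j
        rw [hMdef, hF, Matrix.mul_add, Matrix.mul_one]
        simp only [Matrix.add_apply]
        congr 1
        rw [Matrix.mul_apply]
        by_cases h : j = 0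
        · simp only [Matrix.of_apply, h, ne_eq, not_true_eq_false, and_false, if_false, mul_zero]
          exact Finset.sum_const_zero
        · simp only [Matrix.of_apply, ne_eq, h, not_false_eq_true, and_true, if_true]
          rw [Finset.sum_eq_single (0 : Fin (n + 1))]
          · rw [if_pos rfl]
          · intro k _ hk
            rw [if_neg hk, mul_zero]
          · intro h'; exact absurd (Finset.mem_univ _) h'
      have hMcol : ∀ i, M i 0 = if i = i₀ then c else 0 := by
        intro i
        rw [hM]
        simp only [ne_eq, not_true_eq_false, if_false]
        rw [hM₁col i]
        simp
      have hMrow : ∀ j, M i₀ j = if j = 0 then c else 0 := by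
        intro j
        by_cases hj : j = 0
        · subst hj
          rw [hMcol i₀, if_pos rfl, if_pos rfl]
        · rw [hM, if_pos hj, if_neg hj, hM₁col i₀, if_pos rfl]
          field_simp
          ring
      have hMoff : ∀ i j, i ≠ i₀ → j ≠ 0 → M i j = (E * W) i j := by
        intro i j hi hj
        rw [hM, if_pos hj, hM₁col i, if_neg hi, zero_mul, add_zero]
      -- determinant bookkeeping
      set M' := M.submatrix i₀.succAbove Fin.succ with hM'def
      have hdetM : M.det = (-1 : ℂ) ^ (i₀ : ℕ) * c * M'.det := by
        rw [Matrix.det_succ_column_zero]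
        rw [Finset.sum_eq_single i₀]
        · rw [hMcol i₀, if_pos rfl, hM'def]
        · intro i _ hne
          rw [hMcol i, if_neg hne]
          ring
        · intro h'; exact absurd (Finset.mem_univ _) h'
      have hdetMunit : IsUnit M.det := by
        rw [hMdef, Matrix.det_mul, Matrix.det_mul]
        exact (hEdet.mul hW).mul hFdet
      have hdetM' : IsUnit M'.det := by
        rw [hdetM, isUnit_iff_ne_zero] at hdetMunit
        rw [isUnit_iff_ne_zero]
        intro h
        rw [h, mul_zero] at hdetMunit
        exact hdetMunit rfl
      obtain ⟨π', U₁', U₂', ht1, ht2, hd1, hd2, hfac⟩ := ih M' hdetM'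
      -- assemble
      set πh : Equiv.Perm (Fin (n + 1)) :=
        (finSuccEquiv' i₀).trans ((Equiv.optionCongr π').trans (finSuccEquiv' 0).symm) with hπh
      have hπhp : πh i₀ = 0 := by
        rw [hπh]
        simp only [Equiv.trans_apply, finSuccEquiv'_at, Equiv.optionCongr_apply, Option.map_none]
        exact finSuccEquiv'_symm_none 0
      have hπhs : ∀ a, πh (i₀.succAbove a) = (π' a).succ := by
        intro a
        rw [hπh]
        simp only [Equiv.trans_apply, finSuccEquiv'_succAbove, Equiv.optionCongr_apply,
          Option.map_some]
        rw [finSuccEquiv'_symm_some, Fin.zero_succAbove]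
      set V₁ := pivotLift i₀ c U₁' with hU1
      set V₂ := pivotLift 0 1 U₂' with hU2
      have hprod : M = V₁ * permMat πh * V₂ := by
        ext i j
        rw [Matrix.mul_assoc, Matrix.mul_apply]
        have hco : ∀ k, (permMat πh * V₂) k j = V₂ (πh k) j := fun k => permMat_mul_apply _ _ _ _
        simp_rw [hco]
        rw [Fin.sum_univ_succAbove (fun k => V₁ i k * V₂ (πh k) j) i₀]
        rw [hπhp]
        by_cases hi : i = i₀
        · subst hi
          rw [hU1, pivotLift_left_p, if_pos rfl]
          have hz : ∀ a : Fin n,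
              pivotLift i₀ c U₁' i₀ (i₀.succAbove a) * V₂ (πh (i₀.succAbove a)) j = 0 := by
            intro a
            rw [pivotLift_p_sa, zero_mul]
          rw [Finset.sum_congr rfl (fun a _ => hz a), Finset.sum_const_zero, add_zero]
          rw [hU2, pivotLift_p_right, hMrow j]
          by_cases hj : j = 0
          · subst hj; rw [if_pos rfl, if_pos rfl, mul_one]
          · rw [if_neg hj, if_neg hj, mul_zero]
        · obtain ⟨a, rfl⟩ := Fin.exists_succAbove_eq hi
          rw [hU1, pivotLift_sa_p, zero_mul, zero_add]
          simp_rw [hπhs]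
          by_cases hj : j = 0
          · subst hj
            have hz : ∀ b, pivotLift i₀ c U₁' (i₀.succAbove a) (i₀.succAbove b)
                * V₂ (π' b).succ 0 = 0 := by
              intro b
              rw [hU2, pivotLift_left_p, if_neg (Fin.succ_ne_zero _), mul_zero]
            rw [Finset.sum_congr rfl (fun b _ => hz b), Finset.sum_const_zero]
            rw [hMcol, if_neg (Fin.succAbove_ne i₀ a)]
          · obtain ⟨j', rfl⟩ : ∃ j'' : Fin n, j''.succ = j := ⟨j.pred hj, Fin.succ_pred j hj⟩
            have hstep : ∀ b, pivotLift i₀ c U₁' (i₀.succAbove a) (i₀.succAbove b)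
                * V₂ (π' b).succ j'.succ = U₁' a b * U₂' (π' b) j' := by
              intro b
              rw [pivotLift_sa_sa, hU2]
              rw [show (π' b).succ = (0 : Fin (n + 1)).succAbove (π' b) from
                (Fin.zero_succAbove _).symm]
              rw [show (j').succ = (0 : Fin (n + 1)).succAbove j' from (Fin.zero_succAbove _).symm]
              rw [pivotLift_sa_sa]
            rw [Finset.sum_congr rfl (fun b _ => hstep b)]
            have : M (i₀.succAbove a) j'.succ = M' a j' := rfl
            rw [this, hfac, Matrix.mul_assoc, Matrix.mul_apply]
            apply Finset.sum_congr rfl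
            intro b _
            rw [permMat_mul_apply]
      -- final packaging
      have hcunit : IsUnit c := isUnit_iff_ne_zero.2 hWi₀
      have hU1tri : IsUpperTri V₁ := pivotLift_upperTri ht1
      have hU2tri : IsUpperTri V₂ := pivotLift_upperTri ht2
      have hU1det : IsUnit V₁.det := by rw [hU1, pivotLift_det]; exact hcunit.mul hd1
      have hU2det : IsUnit V₂.det := by rw [hU2, pivotLift_det, one_mul]; exact hd2
      refine ⟨πh, E⁻¹ * V₁, V₂ * F⁻¹, upperTri_mul (upperTri_inv hEtri hEdet) hU1tri,
        upperTri_mul hU2tri (upperTri_inv hFtri hFdet), ?_, ?_, ?_⟩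
      · rw [Matrix.det_mul]
        exact (Matrix.isUnit_nonsing_inv_det E hEdet).mul hU1det
      · rw [Matrix.det_mul]
        exact hU2det.mul (Matrix.isUnit_nonsing_inv_det F hFdet)
      · have : E⁻¹ * M * F⁻¹ = W := by
          rw [hMdef]
          rw [← Matrix.mul_assoc, ← Matrix.mul_assoc]
          rw [Matrix.nonsing_inv_mul E hEdet, Matrix.one_mul,
            Matrix.mul_assoc, Matrix.mul_nonsing_inv F hFdet, Matrix.mul_one]
        rw [← this, hprod]
        noncomm_ring
end EchAux

end BruhatExist

noncomputable section RankCount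

namespace EchAux

open Matrix

variable {n : ℕ}

lemma submatrix_upperTri_det_isUnit {U : Matrix (Fin n) (Fin n) ℂ} (h : IsUpperTri U)
    (hd : IsUnit U.det) (S : Finset (Fin n)) :
    IsUnit ((U.submatrix (fun k : {x // x ∈ S} => (k : Fin n))
      (fun k : {x // x ∈ S} => (k : Fin n))).det) := by
  have htri : (U.submatrix (fun k : {x // x ∈ S} => (k : Fin n))
      (fun k : {x // x ∈ S} => (k : Fin n))).BlockTriangular id := by
    intro i j hij
    exact h (i : Fin n) (j : Fin n) (by exact_mod_cast hij)
  rw [Matrix.det_of_upperTriangular htri]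
  rw [isUnit_iff_ne_zero, Finset.prod_ne_zero_iff]
  intro i _
  exact upperTri_diag_ne_zero h hd (i : Fin n)

lemma rank_permMat_submatrix (π : Equiv.Perm (Fin n)) (S T : Finset (Fin n)) :
    ((permMat π).submatrix (fun k : {x // x ∈ S} => (k : Fin n))
      (fun l : {x // x ∈ T} => (l : Fin n))).rank
      = (S.filter (fun k => π k ∈ T)).card := by
  rw [Matrix.rank_eq_finrank_span_row]
  set g : {x // x ∈ T} → ({x // x ∈ T} → ℂ) := fun t => Pi.single t 1 with hg
  set A : Set {x // x ∈ T} := {t | π.symm (t : Fin n) ∈ S} with hA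
  have hrows : Set.range ((permMat π).submatrix (fun k : {x // x ∈ S} => (k : Fin n))
      (fun l : {x // x ∈ T} => (l : Fin n))) ⊆
      insert 0 (g '' A) := by
    rintro v ⟨k, rfl⟩
    by_cases hk : π (k : Fin n) ∈ T
    · right
      refine ⟨⟨π (k : Fin n), hk⟩, by simp [hA, k.2], ?_⟩
      funext l
      simp only [hg, Matrix.submatrix_apply, permMat]
      rw [Pi.single_apply]
      by_cases hl : π (k : Fin n) = (l : Fin n)
      · rw [if_pos hl, if_pos (Subtype.ext hl.symm)]
      · rw [if_neg hl, if_neg (fun hh => hl (congrArg Subtype.val hh).symm)]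
    · left
      funext l
      simp only [Matrix.submatrix_apply, permMat, Pi.zero_apply]
      rw [if_neg]
      intro hh
      exact hk (hh ▸ l.2)
  have hrows2 : g '' A ⊆ Set.range ((permMat π).submatrix
      (fun k : {x // x ∈ S} => (k : Fin n)) (fun l : {x // x ∈ T} => (l : Fin n))) := by
    rintro v ⟨t, ht, rfl⟩
    refine ⟨⟨π.symm (t : Fin n), ht⟩, ?_⟩
    funext l
    simp only [hg, Matrix.submatrix_apply, permMat, Equiv.apply_symm_apply]
    rw [Pi.single_apply]
    by_cases hl : (t : Fin n) = (l : Fin n)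
    · rw [if_pos hl, if_pos (Subtype.ext hl.symm)]
    · rw [if_neg hl, if_neg (fun hh => hl (congrArg Subtype.val hh).symm)]
  have hspan : Submodule.span ℂ (Set.range ((permMat π).submatrix
      (fun k : {x // x ∈ S} => (k : Fin n)) (fun l : {x // x ∈ T} => (l : Fin n))))
      = Submodule.span ℂ (g '' A) := by
    apply le_antisymm
    · refine Submodule.span_le.mpr (fun v hv => ?_)
      rcases hrows hv with h0 | hmem
      · rw [h0]; exact Submodule.zero_mem _
      · exact Submodule.subset_span hmem
    · exact Submodule.span_le.mpr (fun v hv => Submodule.subset_span (hrows2 hv))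
  unfold Matrix.row
  rw [hspan]
  have hli : LinearIndependent ℂ (fun t : A => g (t : {x // x ∈ T})) := by
    have : LinearIndependent ℂ g := by
      have hbasis := (Pi.basisFun ℂ {x // x ∈ T}).linearIndependent
      have : g = ⇑(Pi.basisFun ℂ {x // x ∈ T}) := by
        funext t; rw [hg]; simp
      rw [this]
      exact hbasis
    exact this.comp (fun t : A => (t : {x // x ∈ T})) Subtype.val_injective
  have himg : g '' A = Set.range (fun t : A => g (t : {x // x ∈ T})) := by
    rw [← Set.image_eq_range]
  rw [himg]
  rw [finrank_span_eq_card hli]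
  -- now count
  rw [← Fintype.card_coe (S.filter (fun k => π k ∈ T))]
  apply Fintype.card_congr
  refine Equiv.ofBijective (fun t => ⟨π.symm ((t : {x // x ∈ T}) : Fin n), ?_⟩) ⟨?_, ?_⟩
  · rw [Finset.mem_filter]
    refine ⟨t.2, ?_⟩
    rw [Equiv.apply_symm_apply]
    exact (t : {x // x ∈ T}).2
  · intro a b hab
    apply Subtype.ext; apply Subtype.ext
    have := congrArg Subtype.val hab
    exact π.symm.injective this
  · rintro ⟨k, hk⟩
    rw [Finset.mem_filter] at hk
    refine ⟨⟨⟨π k, hk.2⟩, ?_⟩, ?_⟩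
    · show π.symm (π k) ∈ S
      rw [Equiv.symm_apply_apply]; exact hk.1
    · apply Subtype.ext
      show π.symm (π k) = k
      rw [Equiv.symm_apply_apply]

lemma rank_corner {W U₁ U₂ : Matrix (Fin n) (Fin n) ℂ} {π : Equiv.Perm (Fin n)}
    (h1 : IsUpperTri U₁) (h2 : IsUpperTri U₂) (hd1 : IsUnit U₁.det) (hd2 : IsUnit U₂.det)
    (hW : W = U₁ * permMat π * U₂)
    (S T : Finset (Fin n))
    (hS : ∀ a b : Fin n, a ∈ S → a ≤ b → b ∈ S)
    (hT : ∀ a b : Fin n, a ∈ T → b ≤ a → b ∈ T) :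
    (W.submatrix (fun k : {x // x ∈ S} => (k : Fin n))
      (fun l : {x // x ∈ T} => (l : Fin n))).rank
      = (S.filter (fun k => π k ∈ T)).card := by
  have key : W.submatrix (fun k : {x // x ∈ S} => (k : Fin n))
        (fun l : {x // x ∈ T} => (l : Fin n))
      = (U₁.submatrix (fun k : {x // x ∈ S} => (k : Fin n))
            (fun k : {x // x ∈ S} => (k : Fin n)))
        * ((permMat π).submatrix (fun k : {x // x ∈ S} => (k : Fin n))
            (fun l : {x // x ∈ T} => (l : Fin n)))
        * (U₂.submatrix (fun l : {x // x ∈ T} => (l : Fin n))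
            (fun l : {x // x ∈ T} => (l : Fin n))) := by
    ext i j
    have hinner : ∀ k' : Fin n,
        (∑ l : {x // x ∈ T}, permMat π k' (l : Fin n) * U₂ (l : Fin n) (j : Fin n))
        = if π k' ∈ T then U₂ (π k') (j : Fin n) else 0 := by
      intro k'
      by_cases hk : π k' ∈ T
      · rw [if_pos hk]
        rw [Finset.sum_eq_single (⟨π k', hk⟩ : {x // x ∈ T})]
        · simp [permMat]
        · intro l _ hl
          simp only [permMat, ite_mul, one_mul, zero_mul]
          rw [if_neg]
          intro hh
          exact hl (Subtype.ext hh.symm)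
        · intro hh; exact absurd (Finset.mem_univ _) hh
      · rw [if_neg hk]
        apply Finset.sum_eq_zero
        intro l _
        simp only [permMat, ite_mul, one_mul, zero_mul]
        rw [if_neg]
        intro hh
        exact hk (hh ▸ l.2)
    rw [Matrix.mul_assoc, Matrix.mul_apply]
    simp only [Matrix.mul_apply, Matrix.submatrix_apply]
    -- RHS  : ∑ k' : ↥S, U₁ ↑i ↑k' * (∑ l, ...)
    have hrhs : ∀ k' : {x // x ∈ S},
        (∑ l : {x // x ∈ T}, permMat π (k' : Fin n) (l : Fin n) * U₂ (l : Fin n) (j : Fin n))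
        = if π (k' : Fin n) ∈ T then U₂ (π (k' : Fin n)) (j : Fin n) else 0 :=
      fun k' => hinner _
    -- LHS
    have hlhs : W (i : Fin n) (j : Fin n)
        = ∑ k : Fin n, U₁ (i : Fin n) k * (if π k ∈ T then U₂ (π k) (j : Fin n) else 0) := by
      rw [hW, Matrix.mul_assoc, Matrix.mul_apply]
      apply Finset.sum_congr rfl
      intro k _
      rw [permMat_mul_apply]
      by_cases hk : π k ∈ T
      · rw [if_pos hk]
      · rw [if_neg hk]
        have : U₂ (π k) (j : Fin n) = 0 := by
          apply h2
          by_contra hlt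
          push_neg at hlt
          exact hk (hT _ _ j.2 hlt)
        rw [this, mul_zero]
    rw [hlhs]
    have hstep : (∑ x : {x // x ∈ S}, U₁ (i : Fin n) (x : Fin n)
        * ∑ l : {x // x ∈ T}, permMat π (x : Fin n) (l : Fin n) * U₂ (l : Fin n) (j : Fin n))
        = ∑ x : {x // x ∈ S}, U₁ (i : Fin n) (x : Fin n)
            * (if π (x : Fin n) ∈ T then U₂ (π (x : Fin n)) (j : Fin n) else 0) :=
      Finset.sum_congr rfl (fun k' _ => by rw [hrhs k'])
    rw [hstep]
    rw [← Finset.sum_subtype S (fun k => Iff.rfl)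
      (fun k => U₁ (i : Fin n) k * (if π k ∈ T then U₂ (π k) (j : Fin n) else 0))]
    symm
    apply Finset.sum_subset (Finset.subset_univ S)
    intro k _ hk
    have : U₁ (i : Fin n) k = 0 := by
      apply h1
      by_contra hlt
      push_neg at hlt
      exact hk (hS _ _ i.2 hlt)
    rw [this, zero_mul]
  rw [key]
  rw [Matrix.rank_mul_eq_left_of_isUnit_det _ _ (submatrix_upperTri_det_isUnit h2 hd2 T)]
  rw [Matrix.rank_mul_eq_right_of_isUnit_det _ _ (submatrix_upperTri_det_isUnit h1 hd1 S)]
  exact rank_permMat_submatrix π S T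

end EchAux

end RankCount

noncomputable section LinExtBuild

namespace EchAux

lemma nat_key_lt {c1 c2 h1v h2v e1 e2 B : ℕ} (hc : c1 ≤ c2) (hh : h1v < h2v) (he1 : e1 < B) :
    (c1 * B + h1v) * B + e1 < (c2 * B + h2v) * B + e2 := by
  have h0 : c1 * B ≤ c2 * B := Nat.mul_le_mul_right B hc
  have h1 : c1 * B + h1v + 1 ≤ c2 * B + h2v := by omega
  calc (c1 * B + h1v) * B + e1 < (c1 * B + h1v) * B + B := by omega
    _ = (c1 * B + h1v + 1) * B := by ring
    _ ≤ (c2 * B + h2v) * B := Nat.mul_le_mul_right B h1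
    _ ≤ (c2 * B + h2v) * B + e2 := Nat.le_add_right _ _

lemma nat_key_mod {cB hv e B : ℕ} (he : e < B) : ((cB + hv) * B + e) % B = e := by
  rw [Nat.add_comm, Nat.add_mul_mod_self_right, Nat.mod_eq_of_lt he]

lemma nat_key_window {hv e hv' e' B : ℕ} (hh : hv < B) (he : e < B) :
    (0 * B + hv) * B + e < (1 * B + hv') * B + e' := by
  have k1 : (0 * B + hv) * B = hv * B := by ring
  have k2 : (hv + 1) * B = hv * B + B := by ring
  have k3 : (hv + 1) * B ≤ B * B := Nat.mul_le_mul_right B (by omega)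
  have k5 : B * B ≤ (1 * B + hv') * B := Nat.mul_le_mul_right B (by omega)
  omega

variable {α : Type*} [PartialOrder α] [Fintype α]

/-- Build a linear extension from an injective, strictly order-preserving key. -/
lemma exists_linext_of_key (key : α → ℕ) (hmono : ∀ a b : α, a < b → key a < key b)
    (hinj : Function.Injective key) :
    ∃ σ : α ≃ Fin (Fintype.card α), IsLinExt σ ∧ ∀ a b : α, σ a ≤ σ b ↔ key a ≤ key b := by
  classical
  have hcard : ∀ a : α, (Finset.univ.filter (fun b => key b < key a)).card < Fintype.card α := by
    intro a
    have hss : Finset.univ.filter (fun b => key b < key a) ⊂ Finset.univ := by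
      constructor
      · exact Finset.filter_subset _ _
      · intro hsub
        have := hsub (Finset.mem_univ a)
        rw [Finset.mem_filter] at this
        exact absurd this.2 (lt_irrefl _)
    have := Finset.card_lt_card hss
    rwa [Finset.card_univ] at this
  set f : α → Fin (Fintype.card α) := fun a =>
    ⟨(Finset.univ.filter (fun b => key b < key a)).card, hcard a⟩ with hf
  have hfmono : ∀ a b : α, key a ≤ key b → f a ≤ f b := by
    intro a b hab
    have : Finset.univ.filter (fun x => key x < key a)
        ⊆ Finset.univ.filter (fun x => key x < key b) := by
      intro x hx
      rw [Finset.mem_filter] at hx ⊢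
      exact ⟨hx.1, lt_of_lt_of_le hx.2 hab⟩
    exact Finset.card_le_card this
  have hfstrict : ∀ a b : α, key a < key b → f a < f b := by
    intro a b hab
    have hss : Finset.univ.filter (fun x => key x < key a)
        ⊂ Finset.univ.filter (fun x => key x < key b) := by
      constructor
      · intro x hx
        rw [Finset.mem_filter] at hx ⊢
        exact ⟨hx.1, lt_trans hx.2 hab⟩
      · intro hsub
        have := hsub (by rw [Finset.mem_filter]; exact ⟨Finset.mem_univ a, hab⟩)
        rw [Finset.mem_filter] at this
        exact absurd this.2 (lt_irrefl _)
    exact Finset.card_lt_card hss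
  have hfinj : Function.Injective f := by
    intro a b hab
    by_contra hne
    rcases lt_or_gt_of_ne (fun h : key a = key b => hne (hinj h)) with h | h
    · exact absurd hab (ne_of_lt (hfstrict a b h))
    · exact absurd hab.symm (ne_of_lt (hfstrict b a h))
  have hbij : Function.Bijective f :=
    (Fintype.bijective_iff_injective_and_card f).mpr ⟨hfinj, (Fintype.card_fin _).symm⟩
  refine ⟨Equiv.ofBijective f hbij, ?_, ?_⟩
  · intro a b hab
    rcases eq_or_lt_of_le hab with rfl | hlt
    · exact le_refl _
    · exact (hfmono a b (hmono a b hlt).le)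
  · intro a b
    constructor
    · intro hab
      by_contra hcon
      push_neg at hcon
      exact absurd (lt_of_lt_of_le (hfstrict b a hcon) hab) (lt_irrefl _)
    · exact hfmono a b

/-- The number of elements below `a`. -/
def hgt (a : α) : ℕ := (Finset.univ.filter (fun b => b ≤ a)).card

lemma hgt_strict {a b : α} (h : a < b) : hgt a < hgt b := by
  apply Finset.card_lt_card
  constructor
  · intro x hx
    rw [Finset.mem_filter] at hx ⊢
    exact ⟨hx.1, le_trans hx.2 h.le⟩
  · intro hsub
    have := hsub (by rw [Finset.mem_filter]; exact ⟨Finset.mem_univ b, le_refl b⟩)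
    rw [Finset.mem_filter] at this
    exact absurd (lt_of_le_of_lt this.2 h) (lt_irrefl _)

lemma hgt_lt (a : α) : hgt a < Fintype.card α + 1 := by
  have h2 : hgt a ≤ Fintype.card α := by
    rw [hgt, ← Finset.card_univ]
    exact Finset.card_le_card (Finset.filter_subset _ _)
  omega

/-- A linear extension adapted to `x`: everything not above `x` comes before `x`. -/
lemma exists_adapted (x : α) :
    ∃ σ : α ≃ Fin (Fintype.card α), IsLinExt σ ∧ ∀ w : α, σ x ≤ σ w ↔ x ≤ w := by
  classical
  let B : ℕ := Fintype.card α + 1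
  let e : α → ℕ := fun a => ((Fintype.equivFin α) a : ℕ)
  have heB : ∀ a, e a < B := fun a => Nat.lt_succ_of_lt ((Fintype.equivFin α) a).2
  let key : α → ℕ := fun a => ((if x ≤ a then 1 else 0) * B + hgt a) * B + e a
  have hkmono : ∀ a b : α, a < b → key a < key b := by
    intro a b hab
    apply nat_key_lt ?_ (hgt_strict hab) (heB a)
    by_cases hxa : x ≤ a
    · rw [if_pos hxa, if_pos (le_trans hxa hab.le)]
    · rw [if_neg hxa]
      by_cases hxb : x ≤ b <;> simp [hxb]
  have hkinj : Function.Injective key := by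
    intro a b hab
    have hea : key a % B = e a := nat_key_mod (heB a)
    have heb : key b % B = e b := nat_key_mod (heB b)
    have : e a = e b := by rw [← hea, ← heb, hab]
    exact (Fintype.equivFin α).injective (Fin.ext this)
  have hwin : ∀ w : α, ¬ x ≤ w → key w < key x := by
    intro w hxw
    show ((if x ≤ w then 1 else 0) * B + hgt w) * B + e w
      < ((if x ≤ x then 1 else 0) * B + hgt x) * B + e x
    rw [if_neg hxw, if_pos (le_refl x)]
    exact nat_key_window (hgt_lt w) (heB w)
  obtain ⟨σ, hlin, hiff⟩ := exists_linext_of_key key hkmono hkinj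
  refine ⟨σ, hlin, ?_⟩
  intro w
  rw [hiff]
  constructor
  · intro h
    by_contra hxw
    exact absurd (lt_of_le_of_lt h (hwin w hxw)) (lt_irrefl _)
  · intro h
    rcases eq_or_lt_of_le h with rfl | hlt
    · exact le_refl _
    · exact (hkmono x w hlt).le

/-- A linear extension putting a minimal `x` first. -/
lemma exists_adapted_min (x : α) (hmin : ∀ v : α, ¬ v < x) :
    ∃ σ : α ≃ Fin (Fintype.card α), IsLinExt σ ∧ ∀ w : α, σ x ≤ σ w := by
  classical
  let B : ℕ := Fintype.card α + 1
  let e : α → ℕ := fun a => ((Fintype.equivFin α) a : ℕ)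
  have heB : ∀ a, e a < B := fun a => Nat.lt_succ_of_lt ((Fintype.equivFin α) a).2
  let key : α → ℕ := fun a => ((if a = x then 0 else 1) * B + hgt a) * B + e a
  have hkmono : ∀ a b : α, a < b → key a < key b := by
    intro a b hab
    apply nat_key_lt ?_ (hgt_strict hab) (heB a)
    have hbx : b ≠ x := fun hbx => hmin a (hbx ▸ hab)
    rw [if_neg hbx]
    by_cases hax : a = x <;> simp [hax]
  have hkinj : Function.Injective key := by
    intro a b hab
    have hea : key a % B = e a := nat_key_mod (heB a)
    have heb : key b % B = e b := nat_key_mod (heB b)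
    have : e a = e b := by rw [← hea, ← heb, hab]
    exact (Fintype.equivFin α).injective (Fin.ext this)
  have hwin : ∀ w : α, w ≠ x → key x < key w := by
    intro w hxw
    show ((if x = x then 0 else 1) * B + hgt x) * B + e x
      < ((if w = x then 0 else 1) * B + hgt w) * B + e w
    rw [if_pos rfl, if_neg hxw]
    exact nat_key_window (hgt_lt x) (heB x)
  obtain ⟨σ, hlin, hiff⟩ := exists_linext_of_key key hkmono hkinj
  refine ⟨σ, hlin, ?_⟩
  intro w
  rw [hiff]
  by_cases hw : w = x
  · subst hw; exact le_refl _
  · exact (hwin w hw).le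

end EchAux

end LinExtBuild

noncomputable section MainAux

namespace EchAux

open Matrix

lemma cartan_det_isUnit {α : Type*} [PartialOrder α] {N : ℕ} (σ : α ≃ Fin N)
    (hσ : IsLinExt σ) : IsUnit (cartan σ).det := by
  have htri : IsUpperTri (cartan σ)ᵀ := by
    intro i j hij
    simp only [Matrix.transpose_apply, cartan]
    rw [if_neg]
    intro hle
    have := hσ _ _ hle
    rw [Equiv.apply_symm_apply, Equiv.apply_symm_apply] at this
    exact absurd (lt_of_lt_of_le hij this) (lt_irrefl _)
  have hdet : (cartan σ)ᵀ.det = 1 := by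
    rw [upperTri_det htri]
    have hdiag : ∀ i, (cartan σ)ᵀ i i = 1 := by
      intro i
      simp only [Matrix.transpose_apply, cartan]
      rw [if_pos (le_refl _)]
    rw [Finset.prod_congr rfl (fun i _ => hdiag i), Finset.prod_const_one]
  rw [← Matrix.det_transpose, hdet]
  exact isUnit_one

end EchAux

end MainAux

/-- A finite poset is connected if any two elements are joined by a path in the
Hasse diagram (a zigzag of covering relations). -/
def PosetConnected (α : Type*) [PartialOrder α] : Prop :=
  ∀ a b : α, Relation.ReflTransGen (fun x y : α => x ⋖ y ∨ y ⋖ x) a b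

/-- A finite poset is echelon-independent if echelonmotion is the same map for
all linear extensions. -/
def EchIndep (α : Type*) [PartialOrder α] [Fintype α] : Prop :=
  ∀ (σ σ' : α ≃ Fin (Fintype.card α)) (π π' : Equiv.Perm (Fin (Fintype.card α))),
    IsLinExt σ → IsLinExt σ' →
      IsBruhatPerm (cartan σ) π → IsBruhatPerm (cartan σ') π' →
        ech σ π = ech σ' π'

/-- Echelonmotion on an echelon-independent connected finite poset with at
least two elements has no fixed points. -/
theorem stmt13 {α : Type*} [PartialOrder α] [Fintype α]
    (hcard : 2 ≤ Fintype.card α)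
    (hconn : PosetConnected α) (hind : EchIndep α) :
    ∀ (σ : α ≃ Fin (Fintype.card α)) (π : Equiv.Perm (Fin (Fintype.card α))),
      IsLinExt σ → IsBruhatPerm (cartan σ) π → ∀ x : α, ech σ π x ≠ x := by
  classical
  intro σ π hσ hπ x hfix
  -- the echelonmotion as an equivalence
  let E : α ≃ α := σ.trans ((π⁻¹ : Equiv.Perm (Fin (Fintype.card α))).trans σ.symm)
  have hEdef : ∀ z : α, E z = σ.symm (π⁻¹ (σ z)) := fun z => rfl
  have hEx : E x = x := hfix
  have hExsymm : E.symm x = x := (Equiv.symm_apply_eq E).mpr hEx.symm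
  -- common machinery for any linear extension σ'
  have hmach : ∀ (σ' : α ≃ Fin (Fintype.card α)), IsLinExt σ' →
      ∀ (S T : Finset (Fin (Fintype.card α))),
        (∀ a b : Fin (Fintype.card α), a ∈ S → a ≤ b → b ∈ S) →
        (∀ a b : Fin (Fintype.card α), a ∈ T → b ≤ a → b ∈ T) →
        ((cartan σ').submatrix (fun k : {k // k ∈ S} => (k : Fin (Fintype.card α)))
            (fun l : {l // l ∈ T} => (l : Fin (Fintype.card α)))).rank
          = (Finset.univ.filter (fun z : α => σ' (E z) ∈ S ∧ σ' z ∈ T)).card := by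
    intro σ' hσ' S T hS hT
    obtain ⟨π'', V₁, V₂, ht1, ht2, hd1, hd2, hfac⟩ :=
      EchAux.bruhat_exists (cartan σ') (EchAux.cartan_det_isUnit σ' hσ')
    have hech : ech σ π = ech σ' π'' :=
      hind σ σ' π π'' hσ hσ' hπ ⟨V₁, V₂, ht1, ht2, hd1, hd2, hfac⟩
    have hP : ∀ z : α, π''⁻¹ (σ' z) = σ' (E z) := by
      intro z
      have h1 : σ.symm (π⁻¹ (σ z)) = σ'.symm (π''⁻¹ (σ' z)) := congrFun hech z
      rw [hEdef, h1, Equiv.apply_symm_apply]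
    have hrank := EchAux.rank_corner ht1 ht2 hd1 hd2 hfac S T hS hT
    rw [hrank]
    symm
    apply Finset.card_bij (fun z _ => σ' (E z))
    · intro z hz
      rw [Finset.mem_filter] at hz ⊢
      refine ⟨hz.2.1, ?_⟩
      have : π'' (σ' (E z)) = σ' z := by
        rw [← hP z, Equiv.Perm.inv_def, Equiv.apply_symm_apply]
      rw [this]
      exact hz.2.2
    · intro z1 h1 z2 h2 heq
      exact E.injective (σ'.injective heq)
    · intro k hk
      rw [Finset.mem_filter] at hk
      refine ⟨σ'.symm (π'' k), ?_, ?_⟩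
      · rw [Finset.mem_filter]
        refine ⟨Finset.mem_univ _, ?_, ?_⟩
        · have : σ' (E (σ'.symm (π'' k))) = k := by
            rw [← hP, Equiv.apply_symm_apply, Equiv.Perm.inv_def, Equiv.symm_apply_apply]
          rw [this]
          exact hk.1
        · rw [Equiv.apply_symm_apply]
          exact hk.2
      · rw [← hP, Equiv.apply_symm_apply, Equiv.Perm.inv_def, Equiv.symm_apply_apply]
  -- rank via row spans
  have hrank_span : ∀ (σ' : α ≃ Fin (Fintype.card α)) (S T : Finset (Fin (Fintype.card α))),
      ((cartan σ').submatrix (fun k : {k // k ∈ S} => (k : Fin (Fintype.card α)))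
          (fun l : {l // l ∈ T} => (l : Fin (Fintype.card α)))).rank
        = Module.finrank ℂ (Submodule.span ℂ
            ((fun k : Fin (Fintype.card α) => fun l : {l // l ∈ T} =>
              cartan σ' k (l : Fin (Fintype.card α))) '' (S : Set (Fin (Fintype.card α))))) := by
    intro σ' S T
    rw [Matrix.rank_eq_finrank_span_row]
    have himg : ((fun k : Fin (Fintype.card α) => fun l : {l // l ∈ T} =>
        cartan σ' k (l : Fin (Fintype.card α))) '' (S : Set (Fin (Fintype.card α))))
        = Set.range ((cartan σ').submatrix (fun k : {k // k ∈ S} => (k : Fin (Fintype.card α)))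
          (fun l : {l // l ∈ T} => (l : Fin (Fintype.card α)))) := by
      rw [Set.image_eq_range]
      rfl
    rw [himg]
    rfl
  by_cases hminx : ∃ v : α, v < x
  · -- main case: x is not minimal
    obtain ⟨v₀, hv₀⟩ := hminx
    obtain ⟨σ', hσ', hwin⟩ := EchAux.exists_adapted x
    set m := σ' x with hm
    have hsymm_m : σ'.symm m = x := Equiv.symm_apply_apply σ' x
    -- the four windows
    set S₃ : Finset (Fin (Fintype.card α)) := Finset.univ.filter (fun k => m ≤ k) with hS₃
    set S₄ : Finset (Fin (Fintype.card α)) := Finset.univ.filter (fun k => m < k) with hS₄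
    set T₃ : Finset (Fin (Fintype.card α)) := Finset.univ.filter (fun k => k ≤ m) with hT₃
    set T₂ : Finset (Fin (Fintype.card α)) := Finset.univ.filter (fun k => k < m) with hT₂
    have hS₃up : ∀ a b : Fin (Fintype.card α), a ∈ S₃ → a ≤ b → b ∈ S₃ := fun a b ha hab =>
      Finset.mem_filter.mpr ⟨Finset.mem_univ _, le_trans (Finset.mem_filter.mp ha).2 hab⟩
    have hS₄up : ∀ a b : Fin (Fintype.card α), a ∈ S₄ → a ≤ b → b ∈ S₄ := fun a b ha hab =>
      Finset.mem_filter.mpr ⟨Finset.mem_univ _, lt_of_lt_of_le (Finset.mem_filter.mp ha).2 hab⟩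
    have hT₃dn : ∀ a b : Fin (Fintype.card α), a ∈ T₃ → b ≤ a → b ∈ T₃ := fun a b ha hab =>
      Finset.mem_filter.mpr ⟨Finset.mem_univ _, le_trans hab (Finset.mem_filter.mp ha).2⟩
    have hT₂dn : ∀ a b : Fin (Fintype.card α), a ∈ T₂ → b ≤ a → b ∈ T₂ := fun a b ha hab =>
      Finset.mem_filter.mpr ⟨Finset.mem_univ _, lt_of_le_of_lt hab (Finset.mem_filter.mp ha).2⟩
    -- counting identities
    have hzx : ∀ z : α, σ' (E z) = m → z = x := by
      intro z hz
      have h1 : E z = x := σ'.injective (by rw [hz])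
      have h2 := congrArg E.symm h1
      rwa [Equiv.symm_apply_apply, hExsymm] at h2
    have hA52 : (Finset.univ.filter (fun z : α => σ' (E z) ∈ S₃ ∧ σ' z ∈ T₂))
        = Finset.univ.filter (fun z : α => σ' (E z) ∈ S₄ ∧ σ' z ∈ T₂) := by
      apply Finset.filter_congr
      intro z _
      constructor
      · rintro ⟨h1, h2⟩
        refine ⟨?_, h2⟩
        rcases eq_or_lt_of_le (Finset.mem_filter.mp h1).2 with heq | hlt
        · exfalso
          have hzz := hzx z heq.symm
          subst hzz
          exact absurd (Finset.mem_filter.mp h2).2 (lt_irrefl _)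
        · exact Finset.mem_filter.mpr ⟨Finset.mem_univ _, hlt⟩
      · rintro ⟨h1, h2⟩
        exact ⟨Finset.mem_filter.mpr
          ⟨Finset.mem_univ _, (Finset.mem_filter.mp h1).2.le⟩, h2⟩
    have hxin : x ∈ Finset.univ.filter (fun z : α => σ' (E z) ∈ S₃ ∧ σ' z ∈ T₃) := by
      refine Finset.mem_filter.mpr ⟨Finset.mem_univ _, ?_, ?_⟩
      · rw [hEx]
        exact Finset.mem_filter.mpr ⟨Finset.mem_univ _, le_refl _⟩
      · exact Finset.mem_filter.mpr ⟨Finset.mem_univ _, le_refl _⟩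
    have hxnotin : x ∉ Finset.univ.filter (fun z : α => σ' (E z) ∈ S₄ ∧ σ' z ∈ T₃) := by
      intro hxi
      have h1 := (Finset.mem_filter.mp hxi).2.1
      rw [hEx] at h1
      exact absurd (Finset.mem_filter.mp h1).2 (lt_irrefl _)
    have hA34 : (Finset.univ.filter (fun z : α => σ' (E z) ∈ S₃ ∧ σ' z ∈ T₃))
        = insert x (Finset.univ.filter (fun z : α => σ' (E z) ∈ S₄ ∧ σ' z ∈ T₃)) := by
      ext z
      rw [Finset.mem_insert]
      constructor
      · intro hz
        by_cases hzx' : z = x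
        · exact Or.inl hzx'
        · right
          have h1 := (Finset.mem_filter.mp hz).2.1
          have h2 := (Finset.mem_filter.mp hz).2.2
          refine Finset.mem_filter.mpr ⟨Finset.mem_univ _, ?_, h2⟩
          rcases eq_or_lt_of_le (Finset.mem_filter.mp h1).2 with heq | hlt
          · exact absurd (hzx z heq.symm) hzx'
          · exact Finset.mem_filter.mpr ⟨Finset.mem_univ _, hlt⟩
      · rintro (rfl | hz)
        · exact hxin
        · have h1 := (Finset.mem_filter.mp hz).2.1
          have h2 := (Finset.mem_filter.mp hz).2.2
          refine Finset.mem_filter.mpr ⟨Finset.mem_univ _, ?_, h2⟩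
          exact Finset.mem_filter.mpr ⟨Finset.mem_univ _, (Finset.mem_filter.mp h1).2.le⟩
    -- rank equalities
    have hr52 : ((cartan σ').submatrix (fun k : {k // k ∈ S₃} => (k : Fin (Fintype.card α)))
          (fun l : {l // l ∈ T₂} => (l : Fin (Fintype.card α)))).rank
        = ((cartan σ').submatrix (fun k : {k // k ∈ S₄} => (k : Fin (Fintype.card α)))
          (fun l : {l // l ∈ T₂} => (l : Fin (Fintype.card α)))).rank := by
      rw [hmach σ' hσ' S₃ T₂ hS₃up hT₂dn, hmach σ' hσ' S₄ T₂ hS₄up hT₂dn, hA52]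
    have hr34 : ((cartan σ').submatrix (fun k : {k // k ∈ S₃} => (k : Fin (Fintype.card α)))
          (fun l : {l // l ∈ T₃} => (l : Fin (Fintype.card α)))).rank
        = ((cartan σ').submatrix (fun k : {k // k ∈ S₄} => (k : Fin (Fintype.card α)))
          (fun l : {l // l ∈ T₃} => (l : Fin (Fintype.card α)))).rank + 1 := by
      rw [hmach σ' hσ' S₃ T₃ hS₃up hT₃dn, hmach σ' hσ' S₄ T₃ hS₄up hT₃dn, hA34]
      rw [Finset.card_insert_of_notMem hxnotin]
    -- row span argument
    set v : Fin (Fintype.card α) → ({l // l ∈ T₂} → ℂ) :=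
      fun k => fun l => cartan σ' k (l : Fin (Fintype.card α)) with hv
    set w : Fin (Fintype.card α) → ({l // l ∈ T₃} → ℂ) :=
      fun k => fun l => cartan σ' k (l : Fin (Fintype.card α)) with hw
    have hS43sub : (S₄ : Set (Fin (Fintype.card α))) ⊆ (S₃ : Set (Fin (Fintype.card α))) := by
      intro k hk
      rw [Finset.mem_coe] at hk ⊢
      exact Finset.mem_filter.mpr ⟨Finset.mem_univ _, (Finset.mem_filter.mp hk).2.le⟩
    have hspan_le : Submodule.span ℂ (v '' (S₄ : Set (Fin (Fintype.card α))))
        ≤ Submodule.span ℂ (v '' (S₃ : Set (Fin (Fintype.card α)))) :=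
      Submodule.span_mono (Set.image_mono hS43sub)
    have hspan_eq : Submodule.span ℂ (v '' (S₄ : Set (Fin (Fintype.card α))))
        = Submodule.span ℂ (v '' (S₃ : Set (Fin (Fintype.card α)))) := by
      apply Submodule.eq_of_le_of_finrank_le hspan_le
      have e1 := hrank_span σ' S₃ T₂
      have e2 := hrank_span σ' S₄ T₂
      rw [e1, e2] at hr52
      rw [← hr52]
    have hvm_mem : v m ∈ Submodule.span ℂ (v '' (S₄ : Set (Fin (Fintype.card α)))) := by
      rw [hspan_eq]
      exact Submodule.subset_span (Set.mem_image_of_mem _ (Finset.mem_coe.mpr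
        (Finset.mem_filter.mpr ⟨Finset.mem_univ _, le_refl m⟩)))
    have himg4 : v '' (S₄ : Set (Fin (Fintype.card α)))
        = Set.range (fun k : {k // k ∈ S₄} => v (k : Fin (Fintype.card α))) := by
      rw [Set.image_eq_range]
      rfl
    obtain ⟨b, hb⟩ := (Submodule.mem_span_range_iff_exists_fun ℂ).mp (by rwa [himg4] at hvm_mem)
    -- entry computations
    have hentry_k : ∀ (k : {k // k ∈ S₄}) (z : α), z ≤ x →
        cartan σ' (k : Fin (Fintype.card α)) (σ' z) = 1 := by
      intro k z hz
      have hk : m < (k : Fin (Fintype.card α)) := (Finset.mem_filter.mp k.2).2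
      have hxk : x ≤ σ'.symm (k : Fin (Fintype.card α)) := by
        rw [← hwin, Equiv.apply_symm_apply]
        exact hk.le
      show (if σ'.symm (σ' z) ≤ σ'.symm (k : Fin (Fintype.card α)) then (1 : ℂ) else 0) = 1
      rw [Equiv.symm_apply_apply, if_pos (le_trans hz hxk)]
    have hentry_m : ∀ z : α, z ≤ x → cartan σ' m (σ' z) = 1 := by
      intro z hz
      show (if σ'.symm (σ' z) ≤ σ'.symm m then (1 : ℂ) else 0) = 1
      rw [hsymm_m, Equiv.symm_apply_apply, if_pos hz]
    -- σ' v₀ < m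
    have hv0m : σ' v₀ < m := by
      have h0 : ¬ x ≤ v₀ := fun h => absurd (lt_of_le_of_lt h hv₀) (lt_irrefl _)
      exact lt_of_not_ge (fun h => h0 ((hwin v₀).mp h))
    set l₀ : {l // l ∈ T₂} :=
      ⟨σ' v₀, Finset.mem_filter.mpr ⟨Finset.mem_univ _, hv0m⟩⟩ with hl₀
    have hsum_b : (∑ k : {k // k ∈ S₄}, b k) = 1 := by
      have hc := congrFun hb l₀
      rw [Finset.sum_apply] at hc
      simp only [Pi.smul_apply, smul_eq_mul] at hc
      have hL : ∀ k : {k // k ∈ S₄}, v (k : Fin (Fintype.card α)) l₀ = 1 :=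
        fun k => hentry_k k v₀ hv₀.le
      have h3 : (∑ k : {k // k ∈ S₄}, b k * v (k : Fin (Fintype.card α)) l₀)
          = ∑ k : {k // k ∈ S₄}, b k :=
        Finset.sum_congr rfl (fun k _ => by rw [hL k, mul_one])
      rw [← h3, hc]
      exact hentry_m v₀ hv₀.le
    -- the dependence over T₃
    have hwm : (∑ k : {k // k ∈ S₄}, b k • w (k : Fin (Fintype.card α))) = w m := by
      funext l
      have hlm : (l : Fin (Fintype.card α)) ≤ m := (Finset.mem_filter.mp l.2).2
      rw [Finset.sum_apply]
      simp only [Pi.smul_apply, smul_eq_mul]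
      rcases eq_or_lt_of_le hlm with heq | hlt
      · -- l = m : all entries are 1
        have hze : σ'.symm (l : Fin (Fintype.card α)) = x := by rw [heq]; exact hsymm_m
        have hk1 : ∀ k : {k // k ∈ S₄}, w (k : Fin (Fintype.card α)) l = 1 := by
          intro k
          have h5 := hentry_k k (σ'.symm (l : Fin (Fintype.card α))) (le_of_eq hze)
          rwa [Equiv.apply_symm_apply] at h5
        have hm1 : w m l = 1 := by
          have h5 := hentry_m (σ'.symm (l : Fin (Fintype.card α))) (le_of_eq hze)
          rwa [Equiv.apply_symm_apply] at h5
        rw [Finset.sum_congr rfl (fun k _ => by rw [hk1 k, mul_one]), hsum_b, hm1]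
      · -- l < m : use the T₂ identity
        have hc' := congrFun hb
          (⟨(l : Fin (Fintype.card α)), Finset.mem_filter.mpr ⟨Finset.mem_univ _, hlt⟩⟩ :
            {l // l ∈ T₂})
        rw [Finset.sum_apply] at hc'
        simp only [Pi.smul_apply, smul_eq_mul] at hc'
        exact hc'
    have hwm_mem : w m ∈ Submodule.span ℂ (w '' (S₄ : Set (Fin (Fintype.card α)))) := by
      have himg4' : w '' (S₄ : Set (Fin (Fintype.card α)))
          = Set.range (fun k : {k // k ∈ S₄} => w (k : Fin (Fintype.card α))) := by
        rw [Set.image_eq_range]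
        rfl
      rw [himg4', Submodule.mem_span_range_iff_exists_fun ℂ]
      exact ⟨b, hwm⟩
    have hS3ins : (S₃ : Set (Fin (Fintype.card α)))
        = insert m (S₄ : Set (Fin (Fintype.card α))) := by
      ext k
      rw [Set.mem_insert_iff, Finset.mem_coe, Finset.mem_coe]
      constructor
      · intro h
        rcases eq_or_lt_of_le (Finset.mem_filter.mp h).2 with heq | hlt
        · exact Or.inl heq.symm
        · exact Or.inr (Finset.mem_filter.mpr ⟨Finset.mem_univ _, hlt⟩)
      · rintro (rfl | h)
        · exact Finset.mem_filter.mpr ⟨Finset.mem_univ _, le_refl _⟩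
        · exact Finset.mem_filter.mpr ⟨Finset.mem_univ _, (Finset.mem_filter.mp h).2.le⟩
    have hspan3 : Submodule.span ℂ (w '' (S₃ : Set (Fin (Fintype.card α))))
        = Submodule.span ℂ (w '' (S₄ : Set (Fin (Fintype.card α)))) := by
      rw [hS3ins, Set.image_insert_eq]
      exact Submodule.span_insert_eq_span hwm_mem
    have hfinal : ((cartan σ').submatrix (fun k : {k // k ∈ S₃} => (k : Fin (Fintype.card α)))
          (fun l : {l // l ∈ T₃} => (l : Fin (Fintype.card α)))).rank
        = ((cartan σ').submatrix (fun k : {k // k ∈ S₄} => (k : Fin (Fintype.card α)))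
          (fun l : {l // l ∈ T₃} => (l : Fin (Fintype.card α)))).rank := by
      rw [hrank_span σ' S₃ T₃, hrank_span σ' S₄ T₃, hspan3]
    rw [hfinal] at hr34
    omega
  · -- x is minimal
    push_neg at hminx
    obtain ⟨σ', hσ', hwin⟩ := EchAux.exists_adapted_min x hminx
    set m := σ' x with hm
    have hsymm_m : σ'.symm m = x := Equiv.symm_apply_apply σ' x
    set S : Finset (Fin (Fintype.card α)) := Finset.univ.filter (fun k => m < k) with hS
    set T : Finset (Fin (Fintype.card α)) := Finset.univ.filter (fun k => k ≤ m) with hT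
    have hSup : ∀ a b : Fin (Fintype.card α), a ∈ S → a ≤ b → b ∈ S := fun a b ha hab =>
      Finset.mem_filter.mpr ⟨Finset.mem_univ _, lt_of_lt_of_le (Finset.mem_filter.mp ha).2 hab⟩
    have hTdn : ∀ a b : Fin (Fintype.card α), a ∈ T → b ≤ a → b ∈ T := fun a b ha hab =>
      Finset.mem_filter.mpr ⟨Finset.mem_univ _, le_trans hab (Finset.mem_filter.mp ha).2⟩
    have hempty : (Finset.univ.filter (fun z : α => σ' (E z) ∈ S ∧ σ' z ∈ T)) = ∅ := by
      rw [Finset.eq_empty_iff_forall_notMem]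
      intro z hz
      have h1 := (Finset.mem_filter.mp hz).2.1
      have h2 := (Finset.mem_filter.mp hz).2.2
      have h2' : σ' z ≤ m := (Finset.mem_filter.mp h2).2
      have hzm : σ' z = m := le_antisymm h2' (hwin z)
      have hzx2 : z = x := σ'.injective (by rw [hzm])
      subst hzx2
      have h1' : m < σ' (E z) := (Finset.mem_filter.mp h1).2
      rw [hEx, ← hm] at h1'
      exact absurd h1' (lt_irrefl _)
    have hrank0 : ((cartan σ').submatrix (fun k : {k // k ∈ S} => (k : Fin (Fintype.card α)))
        (fun l : {l // l ∈ T} => (l : Fin (Fintype.card α)))).rank = 0 := by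
      rw [hmach σ' hσ' S T hSup hTdn, hempty, Finset.card_empty]
    -- hence x is maximal
    have hxmax : ∀ u : α, ¬ x < u := by
      intro u hu
      have hum : m < σ' u := by
        rcases eq_or_lt_of_le (hwin u) with heq | hlt
        · exfalso
          have : u = x := σ'.injective (by rw [← heq])
          subst this
          exact absurd hu (lt_irrefl _)
        · exact hlt
      have hspan0 : Submodule.span ℂ ((fun k : Fin (Fintype.card α) =>
          fun l : {l // l ∈ T} => cartan σ' k (l : Fin (Fintype.card α)))
          '' (S : Set (Fin (Fintype.card α)))) = ⊥ := by
        have h6 := hrank_span σ' S T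
        rw [hrank0] at h6
        exact (Submodule.finrank_eq_zero).mp h6.symm
      have hrow : (fun k : Fin (Fintype.card α) => fun l : {l // l ∈ T} =>
          cartan σ' k (l : Fin (Fintype.card α))) (σ' u)
          ∈ Submodule.span ℂ ((fun k : Fin (Fintype.card α) => fun l : {l // l ∈ T} =>
            cartan σ' k (l : Fin (Fintype.card α))) '' (S : Set (Fin (Fintype.card α)))) :=
        Submodule.subset_span (Set.mem_image_of_mem _ (Finset.mem_coe.mpr
          (Finset.mem_filter.mpr ⟨Finset.mem_univ _, hum⟩)))
      rw [hspan0, Submodule.mem_bot] at hrow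
      have hval : cartan σ' (σ' u) m = 0 := by
        have := congrFun hrow ⟨m, Finset.mem_filter.mpr ⟨Finset.mem_univ _, le_refl m⟩⟩
        simpa using this
      have hone : cartan σ' (σ' u) m = 1 := by
        show (if σ'.symm m ≤ σ'.symm (σ' u) then (1 : ℂ) else 0) = 1
        rw [hsymm_m, Equiv.symm_apply_apply]
        exact if_pos hu.le
      rw [hval] at hone
      exact zero_ne_one hone
    -- contradiction with connectivity
    obtain ⟨y, hy⟩ := Fintype.exists_ne_of_one_lt_card (by omega) x
    have hpath := hconn x y
    rcases (Relation.ReflTransGen.cases_head hpath) with heq | ⟨c, hstep, -⟩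
    · exact hy heq.symm
    · rcases hstep with hcov | hcov
      · exact hxmax c hcov.lt
      · exact hminx c hcov.lt
end

section
/- Let L be a finite lattice such that μ_L(pop↓(x), x) ≠ 0 for every x ∈ L, where pop↓(x) is the meet of x with all elements covered by x. Let σ be a linear extension of L. Define Υ(x) = {z ∈ L : z ∧ x = pop↓(x)} and α(x) = the element of Υ(x) with maximal σ-value. If α : L → L is a bijection, then Ech_σ(x) = α(x) for every x ∈ L. -/
open scoped Classical
open Finset

/-- `popDown x` is the meet of `x` with all elements covered by `x`. -/
noncomputable def popDown {L : Type*} [Lattice L] [Fintype L] (x : L) : L :=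
  (insert x (Finset.univ.filter fun y : L => y ⋖ x)).inf'
    (Finset.insert_nonempty _ _) id

/- ### Auxiliary lemmas -/

/-- A matrix triangular with respect to an injective weight has nonzero
determinant provided its diagonal entries are nonzero. -/
lemma det_ne_zero_of_tri {ι : Type*} [Fintype ι] [DecidableEq ι]
    (M : Matrix ι ι ℂ) (w : ι → ℕ) (hw : Function.Injective w)
    (htri : ∀ s t, M s t ≠ 0 → w s ≤ w t) (hdiag : ∀ s, M s s ≠ 0) :
    M.det ≠ 0 := by
  rw [Matrix.det_apply']
  rw [Finset.sum_eq_single (1 : Equiv.Perm ι)]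
  · simpa using Finset.prod_ne_zero_iff.2 fun s _ => hdiag s
  · intro τ _ hτ
    have : ∃ s, M (τ s) s = 0 := by
      by_contra hc
      push_neg at hc
      have hle : ∀ s, w (τ s) ≤ w s := fun s => htri (τ s) s (hc s)
      have hsum : ∑ s, w (τ s) = ∑ s, w s := Equiv.sum_comp τ w
      have : ∀ s, w (τ s) = w s := by
        intro s
        by_contra hne
        have hlt : w (τ s) < w s := lt_of_le_of_ne (hle s) hne
        have : ∑ s, w (τ s) < ∑ s, w s :=
          Finset.sum_lt_sum (fun t _ => hle t) ⟨s, Finset.mem_univ s, hlt⟩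
        omega
      exact hτ (Equiv.ext fun s => hw (this s))
    obtain ⟨s, hs⟩ := this
    exact mul_eq_zero_of_right _ (Finset.prod_eq_zero (Finset.mem_univ s) hs)
  · intro h; exact absurd (Finset.mem_univ _) h

/-- Rank of a matrix whose nonzero columns are indexed by `S` and which has a
nondegenerate square submatrix with columns `S`. -/
lemma rank_eq_card_of_struct {X Y : Type*} [Fintype X] [Fintype Y] [DecidableEq X] [DecidableEq Y]
    (M : Matrix X Y ℂ) (S : Finset Y) (g : ↥S → X)
    (hcol : ∀ y : Y, y ∉ S → ∀ x : X, M x y = 0)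
    (hdet : (Matrix.det (Matrix.of fun s t : ↥S => M (g s) t.val)) ≠ 0) :
    M.rank = S.card := by
  have hcard : Fintype.card ↥S = S.card := Fintype.card_coe S
  apply le_antisymm
  · have hM : M = (Matrix.of fun (x : X) (s : ↥S) => M x s.val) *
        (Matrix.of fun (s : ↥S) (y : Y) => if s.val = y then (1:ℂ) else 0) := by
      ext x y
      simp only [Matrix.mul_apply, Matrix.of_apply]
      by_cases hy : y ∈ S
      · rw [Finset.sum_eq_single (⟨y, hy⟩ : ↥S)]
        · simp
        · intro t _ ht
          have : t.val ≠ y := fun h => ht (Subtype.ext h)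
          simp [this]
        · intro h; exact absurd (Finset.mem_univ _) h
      · rw [hcol y hy x]
        refine (Finset.sum_eq_zero ?_).symm
        intro t _
        have : t.val ≠ y := fun h => hy (h ▸ t.prop)
        simp [this]
    have h1 := Matrix.rank_mul_le_left (Matrix.of fun (x : X) (s : ↥S) => M x s.val)
      (Matrix.of fun (s : ↥S) (y : Y) => if s.val = y then (1:ℂ) else 0)
    rw [← hM] at h1
    exact h1.trans ((Matrix.rank_le_card_width _).trans_eq hcard)
  · set E : Matrix ↥S ↥S ℂ := Matrix.of fun s t : ↥S => M (g s) t.val with hE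
    have hEeq : E = (Matrix.of fun (s : ↥S) (x : X) => if x = g s then (1:ℂ) else 0) *
        (M * Matrix.of fun (y : Y) (t : ↥S) => if y = t.val then (1:ℂ) else 0) := by
      ext s t
      have h2 : ∀ x : X, (M * Matrix.of fun (y : Y) (t : ↥S) => if y = t.val then (1:ℂ) else 0) x t
          = M x t.val := by
        intro x
        simp only [Matrix.mul_apply, Matrix.of_apply]
        rw [Finset.sum_eq_single t.val] <;> simp_all
      simp only [Matrix.mul_apply, Matrix.of_apply]
      rw [Finset.sum_eq_single (g s)]
      · simp [h2 (g s), hE]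
      · intro x _ hx; simp [hx]
      · intro h; exact absurd (Finset.mem_univ _) h
    have hrE : E.rank = S.card := by
      rw [← hcard]
      exact Matrix.rank_of_isUnit E ((Matrix.isUnit_iff_isUnit_det E).2
        (isUnit_iff_ne_zero.2 hdet))
    calc (S.card : ℕ) = E.rank := hrE.symm
    _ ≤ (M * _).rank := by rw [hEeq]; exact Matrix.rank_mul_le_right _ _
    _ ≤ M.rank := Matrix.rank_mul_le_left _ _

lemma upperTri_diag_ne_zero {n : ℕ} {U : Matrix (Fin n) (Fin n) ℂ}
    (hU : IsUpperTri U) (hd : IsUnit U.det) : ∀ k, U k k ≠ 0 := by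
  have hbt : U.BlockTriangular id := fun i j h => hU i j h
  have := Matrix.det_of_upperTriangular hbt
  rw [this] at hd
  have := hd.ne_zero
  intro k
  exact fun h => this (Finset.prod_eq_zero (Finset.mem_univ k) h)

lemma det_submatrix_ne_zero {n : ℕ} {U : Matrix (Fin n) (Fin n) ℂ}
    (hU : IsUpperTri U) (hd : IsUnit U.det) (p : Fin n → Prop) [DecidablePred p] :
    (U.submatrix (Subtype.val : Subtype p → Fin n) Subtype.val).det ≠ 0 := by
  apply det_ne_zero_of_tri _ (fun c => (c.val : ℕ))
  · exact fun a b h => Subtype.ext (Fin.val_injective h)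
  · intro s t h
    by_contra hc
    push_neg at hc
    exact h (hU s.val t.val (by exact_mod_cast hc))
  · exact fun s => upperTri_diag_ne_zero hU hd s.val

lemma rank_tri_mul_left {n : ℕ} {κ : Type*} [Fintype κ]
    (U M : Matrix (Fin n) (Fin n) ℂ) (hU : IsUpperTri U) (hd : IsUnit U.det)
    (i : Fin n) (g : κ → Fin n) :
    ((U * M).submatrix (Subtype.val : {k : Fin n // i ≤ k} → Fin n) g).rank
      = (M.submatrix (Subtype.val : {k : Fin n // i ≤ k} → Fin n) g).rank := by
  have key : (U * M).submatrix (Subtype.val : {k : Fin n // i ≤ k} → Fin n) g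
      = (U.submatrix (Subtype.val : {k : Fin n // i ≤ k} → Fin n)
          (Subtype.val : {k : Fin n // i ≤ k} → Fin n))
        * (M.submatrix (Subtype.val : {k : Fin n // i ≤ k} → Fin n) g) := by
    ext a b
    simp only [Matrix.submatrix_apply, Matrix.mul_apply]
    rw [← Finset.sum_subtype (Finset.univ.filter fun l : Fin n => i ≤ l)
      (fun l => by simp) (fun l => U a.val l * M l (g b))]
    refine (Finset.sum_subset (Finset.filter_subset _ _) ?_).symm
    intro l _ hl
    simp only [Finset.mem_filter, Finset.mem_univ, true_and] at hl
    rw [hU a.val l (lt_of_lt_of_le (lt_of_not_ge hl) a.prop), zero_mul]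
  rw [key]
  exact Matrix.rank_mul_eq_right_of_isUnit_det
    (U.submatrix (Subtype.val : {k : Fin n // i ≤ k} → Fin n) Subtype.val)
    (M.submatrix (Subtype.val : {k : Fin n // i ≤ k} → Fin n) g)
    (isUnit_iff_ne_zero.2 (det_submatrix_ne_zero hU hd _))

lemma rank_tri_mul_right {n : ℕ} {κ : Type*} [Fintype κ]
    (M U : Matrix (Fin n) (Fin n) ℂ) (hU : IsUpperTri U) (hd : IsUnit U.det)
    (j : Fin n) (g : κ → Fin n) :
    ((M * U).submatrix g (Subtype.val : {k : Fin n // k ≤ j} → Fin n)).rank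
      = (M.submatrix g (Subtype.val : {k : Fin n // k ≤ j} → Fin n)).rank := by
  have key : (M * U).submatrix g (Subtype.val : {k : Fin n // k ≤ j} → Fin n)
      = (M.submatrix g (Subtype.val : {k : Fin n // k ≤ j} → Fin n))
        * (U.submatrix (Subtype.val : {k : Fin n // k ≤ j} → Fin n) Subtype.val) := by
    ext a b
    simp only [Matrix.submatrix_apply, Matrix.mul_apply]
    rw [← Finset.sum_subtype (Finset.univ.filter fun l : Fin n => l ≤ j)
      (fun l => by simp) (fun l => M (g a) l * U l b.val)]
    refine (Finset.sum_subset (Finset.filter_subset _ _) ?_).symm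
    intro l _ hl
    simp only [Finset.mem_filter, Finset.mem_univ, true_and] at hl
    rw [hU l b.val (lt_of_le_of_lt b.prop (lt_of_not_ge hl)), mul_zero]
  rw [key]
  exact Matrix.rank_mul_eq_left_of_isUnit_det
    (U.submatrix (Subtype.val : {k : Fin n // k ≤ j} → Fin n) Subtype.val)
    (M.submatrix g (Subtype.val : {k : Fin n // k ≤ j} → Fin n))
    (isUnit_iff_ne_zero.2 (det_submatrix_ne_zero hU hd _))

lemma card_sub_filter {n : ℕ} (j : Fin n) (p : Fin n → Prop) [DecidablePred p] :
    (Finset.univ.filter fun y : {k : Fin n // k ≤ j} => p y.val).card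
      = (Finset.univ.filter fun c : Fin n => c ≤ j ∧ p c).card := by
  apply Finset.card_bij (fun y _ => y.val)
  · intro y hy
    simp only [Finset.mem_filter, Finset.mem_univ, true_and] at hy ⊢
    exact ⟨y.prop, hy⟩
  · intro a _ b _ h
    exact Subtype.ext h
  · intro c hc
    simp only [Finset.mem_filter, Finset.mem_univ, true_and] at hc
    exact ⟨⟨c, hc.1⟩, by simp [hc.2], rfl⟩

lemma cnt_succ {n : ℕ} (f : Fin n → Fin n) (i : Fin n) (m : ℕ) (hm : m < n) :
    (Finset.univ.filter fun c : Fin n => c.val < m + 1 ∧ i ≤ f c).card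
      = (Finset.univ.filter fun c : Fin n => c.val < m ∧ i ≤ f c).card
        + (if i ≤ f ⟨m, hm⟩ then 1 else 0) := by
  have hsplit : (Finset.univ.filter fun c : Fin n => c.val < m + 1 ∧ i ≤ f c)
      = (Finset.univ.filter fun c : Fin n => c.val < m ∧ i ≤ f c)
        ∪ (Finset.univ.filter fun c : Fin n => c = ⟨m, hm⟩ ∧ i ≤ f c) := by
    rw [← Finset.filter_or]
    apply Finset.filter_congr
    intro c _
    constructor
    · rintro ⟨h1, h2⟩
      rcases Nat.lt_succ_iff_lt_or_eq.1 h1 with h | h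
      · exact Or.inl ⟨h, h2⟩
      · exact Or.inr ⟨Fin.ext h, h2⟩
    · rintro (⟨h1, h2⟩ | ⟨h1, h2⟩)
      · exact ⟨Nat.lt_succ_of_lt h1, h2⟩
      · exact ⟨by rw [h1]; exact Nat.lt_succ_self m, h2⟩
  rw [hsplit, Finset.card_union_of_disjoint]
  · congr 1
    by_cases h : i ≤ f ⟨m, hm⟩
    · rw [if_pos h]
      rw [show (Finset.univ.filter fun c : Fin n => c = ⟨m, hm⟩ ∧ i ≤ f c)
          = {⟨m, hm⟩} from ?_]
      · exact Finset.card_singleton _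
      · ext c
        simp only [Finset.mem_filter, Finset.mem_univ, true_and, Finset.mem_singleton]
        exact ⟨fun hc => hc.1, fun hc => ⟨hc, hc ▸ h⟩⟩
    · rw [if_neg h]
      rw [Finset.card_eq_zero, Finset.filter_eq_empty_iff]
      rintro c _ ⟨rfl, hc⟩
      exact h hc
  · rw [Finset.disjoint_left]
    intro a ha hb
    simp only [Finset.mem_filter, Finset.mem_univ, true_and] at ha hb
    rw [hb.1] at ha
    exact absurd ha.1 (lt_irrefl m)

lemma count_determines {n : ℕ} (f g : Fin n → Fin n)
    (h : ∀ i j : Fin n,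
      (Finset.univ.filter fun y : {k : Fin n // k ≤ j} => i ≤ f y.val).card
        = (Finset.univ.filter fun y : {k : Fin n // k ≤ j} => i ≤ g y.val).card) :
    ∀ c, f c = g c := by
  have hcnt : ∀ (i : Fin n) (m : ℕ), m ≤ n →
      (Finset.univ.filter fun c : Fin n => c.val < m ∧ i ≤ f c).card
        = (Finset.univ.filter fun c : Fin n => c.val < m ∧ i ≤ g c).card := by
    intro i m hm
    rcases Nat.eq_zero_or_pos m with rfl | hpos
    · simp
    · have hj : m - 1 < n := by omega
      have hfj := h i ⟨m - 1, hj⟩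
      rw [card_sub_filter ⟨m - 1, hj⟩ (fun c => i ≤ f c),
        card_sub_filter ⟨m - 1, hj⟩ (fun c => i ≤ g c)] at hfj
      have hbase : ∀ c : Fin n, c ≤ (⟨m - 1, hj⟩ : Fin n) ↔ c.val < m := by
        intro c
        rw [Fin.le_def]
        show c.val ≤ m - 1 ↔ c.val < m
        omega
      have e1 : (Finset.univ.filter fun c : Fin n => c ≤ ⟨m - 1, hj⟩ ∧ i ≤ f c)
          = (Finset.univ.filter fun c : Fin n => c.val < m ∧ i ≤ f c) :=
        Finset.filter_congr fun c _ => by rw [hbase c]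
      have e2 : (Finset.univ.filter fun c : Fin n => c ≤ ⟨m - 1, hj⟩ ∧ i ≤ g c)
          = (Finset.univ.filter fun c : Fin n => c.val < m ∧ i ≤ g c) :=
        Finset.filter_congr fun c _ => by rw [hbase c]
      rw [e1, e2] at hfj
      exact hfj
  intro c
  have key : ∀ i : Fin n, (i ≤ f c) ↔ (i ≤ g c) := by
    intro i
    have h1 := hcnt i c.val (le_of_lt c.isLt)
    have h2 := hcnt i (c.val + 1) c.isLt
    rw [cnt_succ f i c.val c.isLt, cnt_succ g i c.val c.isLt] at h2
    have hc : (⟨c.val, c.isLt⟩ : Fin n) = c := Fin.ext rfl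
    rw [hc] at h2
    rw [h1] at h2
    have := Nat.add_left_cancel h2
    by_cases hf : i ≤ f c <;> by_cases hg : i ≤ g c
    · exact iff_of_true hf hg
    · simp [hf, hg] at this
    · simp [hf, hg] at this
    · exact iff_of_false hf hg
  exact le_antisymm ((key (f c)).1 le_rfl) ((key (g c)).2 le_rfl)

lemma popDown_le {L : Type*} [Lattice L] [Fintype L] (x : L) : popDown x ≤ x :=
  Finset.inf'_le id (Finset.mem_insert_self _ _)

/-- Let `L` be a finite lattice with `μ (popDown x) x ≠ 0` for all `x`, and let
`A x` be the element of `Υ(x) = {z : z ⊓ x = popDown x}` with maximal σ-value.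
If `A` is a bijection, then echelonmotion coincides with `A`. -/
theorem stmt16 {L : Type*} [Lattice L] [Fintype L] {n : ℕ}
    (σ : L ≃ Fin n) (hσ : IsLinExt σ)
    (μ : L → L → ℂ)
    (hμ0 : ∀ a b : L, ¬ a ≤ b → μ a b = 0)
    (hμ : ∀ a b : L, a ≤ b →
      ∑ z ∈ Finset.univ.filter (fun z : L => a ≤ z ∧ z ≤ b), μ a z
        = if a = b then 1 else 0)
    (hpop : ∀ x : L, μ (popDown x) x ≠ 0)
    (A : L → L)
    (hA1 : ∀ x : L, A x ⊓ x = popDown x)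
    (hA2 : ∀ x z : L, z ⊓ x = popDown x → σ z ≤ σ (A x))
    (hAbij : Function.Bijective A)
    (π : Equiv.Perm (Fin n)) (hπ : IsBruhatPerm (cartan σ) π) :
    ∀ x : L, ech σ π x = A x := by
  obtain ⟨U₁, U₂, hU₁, hU₂, hd₁, hd₂, hW⟩ := hπ
  -- The invertible upper-triangular column-operation matrix C
  set C : Matrix (Fin n) (Fin n) ℂ := fun k l =>
    if popDown (σ.symm l) ≤ σ.symm k ∧ σ.symm k ≤ σ.symm l
    then μ (popDown (σ.symm l)) (σ.symm k) else 0 with hCdef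
  have hCu : IsUpperTri C := by
    intro k l hkl
    simp only [hCdef]
    rw [if_neg]
    rintro ⟨-, h2⟩
    have h3 := hσ _ _ h2
    simp only [Equiv.apply_symm_apply] at h3
    exact absurd h3 (not_le.2 hkl)
  have hCd : IsUnit C.det := by
    have hbt : C.BlockTriangular id := fun k l hlt => hCu k l hlt
    rw [Matrix.det_of_upperTriangular hbt]
    apply isUnit_iff_ne_zero.2
    apply Finset.prod_ne_zero_iff.2
    intro k _
    simp only [hCdef]
    rw [if_pos ⟨popDown_le _, le_rfl⟩]
    exact hpop _
  -- the entries of `cartan σ * C` : indicator of `Υ`-membership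
  have hWC : ∀ k l : Fin n, (cartan σ * C) k l =
      if σ.symm k ⊓ σ.symm l = popDown (σ.symm l) then 1 else 0 := by
    intro k l
    rw [Matrix.mul_apply]
    rw [← Equiv.sum_comp σ (fun z => cartan σ k z * C z l)]
    have hterm : ∀ w : L, cartan σ k (σ w) * C (σ w) l
        = if popDown (σ.symm l) ≤ w ∧ w ≤ σ.symm k ⊓ σ.symm l
          then μ (popDown (σ.symm l)) w else 0 := by
      intro w
      simp only [cartan, hCdef, Equiv.symm_apply_apply]
      by_cases h1 : w ≤ σ.symm k
      · by_cases h2 : popDown (σ.symm l) ≤ w ∧ w ≤ σ.symm l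
        · rw [if_pos h1, if_pos h2, one_mul, if_pos ⟨h2.1, le_inf h1 h2.2⟩]
        · rw [if_pos h1, if_neg h2, one_mul, if_neg]
          rintro ⟨ha, hb⟩
          exact h2 ⟨ha, hb.trans inf_le_right⟩
      · rw [if_neg h1, zero_mul, if_neg]
        rintro ⟨ha, hb⟩
        exact h1 (hb.trans inf_le_left)
    rw [Finset.sum_congr rfl (fun w _ => hterm w)]
    rw [← Finset.sum_filter]
    by_cases hxy : popDown (σ.symm l) ≤ σ.symm k
    · have hle : popDown (σ.symm l) ≤ σ.symm k ⊓ σ.symm l :=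
        le_inf hxy (popDown_le _)
      rw [hμ _ _ hle]
      by_cases he : σ.symm k ⊓ σ.symm l = popDown (σ.symm l)
      · rw [if_pos he, if_pos he.symm]
      · rw [if_neg he, if_neg (fun hh => he hh.symm)]
    · rw [Finset.filter_false_of_mem, Finset.sum_empty, if_neg]
      · intro he
        exact hxy (he ▸ inf_le_left)
      · rintro w - ⟨hw1, hw2⟩
        exact hxy (le_trans hw1 (le_trans hw2 inf_le_left))
  -- equality of the two counting functions via ranks
  have hcount : ∀ i j : Fin n,
      (Finset.univ.filter fun y : {k : Fin n // k ≤ j} => i ≤ π⁻¹ y.val).card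
        = (Finset.univ.filter fun y : {k : Fin n // k ≤ j} =>
            i ≤ σ (A (σ.symm y.val))).card := by
    intro i j
    set S1 : Finset {k : Fin n // k ≤ j} :=
      Finset.univ.filter (fun y : {k : Fin n // k ≤ j} => i ≤ π⁻¹ y.val) with hS1
    set S2 : Finset {k : Fin n // k ≤ j} :=
      Finset.univ.filter (fun y : {k : Fin n // k ≤ j} =>
        i ≤ σ (A (σ.symm y.val))) with hS2
    have r1 : ((cartan σ).submatrix (Subtype.val : {k : Fin n // i ≤ k} → Fin n)
        (Subtype.val : {k : Fin n // k ≤ j} → Fin n)).rank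
        = ((permMat π).submatrix (Subtype.val : {k : Fin n // i ≤ k} → Fin n)
          (Subtype.val : {k : Fin n // k ≤ j} → Fin n)).rank := by
      rw [hW]
      rw [rank_tri_mul_right (U₁ * permMat π) U₂ hU₂ hd₂ j
        (Subtype.val : {k : Fin n // i ≤ k} → Fin n)]
      exact rank_tri_mul_left U₁ (permMat π) hU₁ hd₁ i
        (Subtype.val : {k : Fin n // k ≤ j} → Fin n)
    have r2 : ((cartan σ * C).submatrix (Subtype.val : {k : Fin n // i ≤ k} → Fin n)
        (Subtype.val : {k : Fin n // k ≤ j} → Fin n)).rank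
        = ((cartan σ).submatrix (Subtype.val : {k : Fin n // i ≤ k} → Fin n)
          (Subtype.val : {k : Fin n // k ≤ j} → Fin n)).rank :=
      rank_tri_mul_right (cartan σ) C hCu hCd j _
    have hg1 : ∀ s : ↥S1, i ≤ π⁻¹ (s.val.val : Fin n) := fun s =>
      (Finset.mem_filter.1 s.prop).2
    have r3 : ((permMat π).submatrix (Subtype.val : {k : Fin n // i ≤ k} → Fin n)
        (Subtype.val : {k : Fin n // k ≤ j} → Fin n)).rank = S1.card := by
      apply rank_eq_card_of_struct _ S1 (fun s => ⟨π⁻¹ s.val.val, hg1 s⟩)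
      · intro y hy x
        simp only [Matrix.submatrix_apply, permMat]
        rw [if_neg]
        intro he
        apply hy
        rw [hS1]
        simp only [Finset.mem_filter, Finset.mem_univ, true_and]
        rw [← he, Equiv.Perm.inv_def, Equiv.symm_apply_apply]
        exact x.prop
      · have hone : (Matrix.of fun s t : ↥S1 =>
            ((permMat π).submatrix (Subtype.val : {k : Fin n // i ≤ k} → Fin n)
              (Subtype.val : {k : Fin n // k ≤ j} → Fin n))
              (⟨π⁻¹ s.val.val, hg1 s⟩ : {k : Fin n // i ≤ k}) t.val)
            = (1 : Matrix ↥S1 ↥S1 ℂ) := by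
          ext s t
          simp only [Matrix.of_apply, Matrix.submatrix_apply, permMat, Matrix.one_apply]
          have hiff : (π (π⁻¹ (s.val.val : Fin n)) = (t.val.val : Fin n)) ↔ s = t := by
            rw [Equiv.Perm.inv_def, Equiv.apply_symm_apply]
            constructor
            · intro h
              exact Subtype.ext (Subtype.ext h)
            · intro h
              rw [h]
          rw [if_congr hiff rfl rfl]
        rw [hone]
        simp
    have hg2 : ∀ s : ↥S2, i ≤ σ (A (σ.symm (s.val.val : Fin n))) := fun s =>
      (Finset.mem_filter.1 s.prop).2
    have r4 : ((cartan σ * C).submatrix (Subtype.val : {k : Fin n // i ≤ k} → Fin n)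
        (Subtype.val : {k : Fin n // k ≤ j} → Fin n)).rank = S2.card := by
      apply rank_eq_card_of_struct _ S2 (fun s => ⟨σ (A (σ.symm s.val.val)), hg2 s⟩)
      · intro y hy x
        rw [Matrix.submatrix_apply, hWC]
        rw [if_neg]
        intro he
        apply hy
        rw [hS2]
        simp only [Finset.mem_filter, Finset.mem_univ, true_and]
        have h5 := hA2 (σ.symm y.val) (σ.symm x.val) he
        rw [Equiv.apply_symm_apply] at h5
        exact le_trans x.prop h5
      · apply det_ne_zero_of_tri _ (fun s : ↥S2 => (σ (A (σ.symm (s.val.val : Fin n)))).val)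
        · intro a b h
          have h1 : σ (A (σ.symm (a.val.val : Fin n))) = σ (A (σ.symm (b.val.val : Fin n))) :=
            Fin.val_injective h
          have h2 := hAbij.1 (σ.injective h1)
          have h3 := σ.symm.injective h2
          exact Subtype.ext (Subtype.ext h3)
        · intro s t h
          simp only [Matrix.of_apply, Matrix.submatrix_apply, hWC] at h
          rw [Equiv.symm_apply_apply] at h
          have hcond : A (σ.symm (s.val.val : Fin n)) ⊓ σ.symm (t.val.val : Fin n)
              = popDown (σ.symm (t.val.val : Fin n)) := by
            by_contra hc
            rw [if_neg hc] at h
            exact h rfl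
          have h5 := hA2 (σ.symm t.val.val) (A (σ.symm s.val.val)) hcond
          exact h5
        · intro s
          simp only [Matrix.of_apply, Matrix.submatrix_apply, hWC]
          rw [Equiv.symm_apply_apply, if_pos (hA1 (σ.symm (s.val.val : Fin n)))]
          exact one_ne_zero
    calc S1.card
        = ((permMat π).submatrix (Subtype.val : {k : Fin n // i ≤ k} → Fin n)
          (Subtype.val : {k : Fin n // k ≤ j} → Fin n)).rank := r3.symm
      _ = ((cartan σ).submatrix (Subtype.val : {k : Fin n // i ≤ k} → Fin n)
          (Subtype.val : {k : Fin n // k ≤ j} → Fin n)).rank := r1.symm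
      _ = ((cartan σ * C).submatrix (Subtype.val : {k : Fin n // i ≤ k} → Fin n)
          (Subtype.val : {k : Fin n // k ≤ j} → Fin n)).rank := r2.symm
      _ = S2.card := r4
  have hmain := count_determines (fun c => π⁻¹ c) (fun c => σ (A (σ.symm c))) hcount
  intro x
  show σ.symm (π⁻¹ (σ x)) = A x
  have h9 : π⁻¹ (σ x) = σ (A (σ.symm (σ x))) := hmain (σ x)
  rw [h9, Equiv.symm_apply_apply, Equiv.symm_apply_apply]
end
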